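/- Let γ_n be the Fourier coefficients of the characteristic function of the arc I₁ = {e^{iθ} : 0 < θ < π/2}, i.e. γ_n = (1/2π)(i/n)(e^{-inπ/2} - 1) for n ≠ 0. Define g_n = (1/2)(γ_{2-n} + γ_{-2-n}) + γ_n for odd n. Then g_n = (i/2π)(e^{-iπn/2} - 1) · (-4)/(n(n² - 4)) = O(n^{-3}). -/

import Mathlib

open scoped Real

/-!
STATEMENT 13: With `γ_n = (1/2π)(i/n)(e^{-inπ/2} - 1)` (`n ≠ 0`) the Fourier coefficients of the
characteristic function of the arc `{e^{iθ} : 0 < θ < π/2}`, and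
`g_n = (1/2)(γ_{2-n} + γ_{-2-n}) + γ_n` for odd `n`, one has
`g_n = (i/2π)(e^{-iπn/2} - 1)·(-4)/(n(n²-4))`, which is `O(n⁻³)`.
-/

lemma aux_abs_bound (n : ℤ) (hn : Odd n) :
    4 * |(n:ℝ)| ^ 3 ≤ 3 * π * |(n:ℝ) * ((n:ℝ) ^ 2 - 4)| := by
  have hπ3 := Real.pi_gt_three
  obtain ⟨k, hk⟩ := hn
  have hcase : n = 1 ∨ n = -1 ∨ n ≤ -3 ∨ 3 ≤ n := by omega
  have key : ∀ m : ℤ, m ≤ -3 ∨ 3 ≤ m → 4 * |(m:ℝ)| ^ 3 ≤ 3 * π * |(m:ℝ) * ((m:ℝ) ^ 2 - 4)| := by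
    intro m hm3
    have hm : (3:ℝ) ≤ |(m:ℝ)| := by
      rcases hm3 with h | h
      · have h' : (3:ℝ) ≤ -(m:ℝ) := by exact_mod_cast (by omega : (3:ℤ) ≤ -m)
        exact h'.trans (neg_le_abs _)
      · have h' : (3:ℝ) ≤ (m:ℝ) := by exact_mod_cast h
        exact h'.trans (le_abs_self _)
    have h9 : (9:ℝ) ≤ |(m:ℝ)| ^ 2 := by nlinarith
    have hsq : (m:ℝ) ^ 2 = |(m:ℝ)| ^ 2 := (sq_abs _).symm
    rw [abs_mul, abs_of_pos (show (0:ℝ) < (m:ℝ)^2 - 4 by nlinarith), hsq]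
    nlinarith [mul_nonneg (mul_nonneg (by linarith : (0:ℝ) ≤ π - 3) (by linarith : (0:ℝ) ≤ |(m:ℝ)|))
        (by nlinarith : (0:ℝ) ≤ 5*|(m:ℝ)|^2 - 36),
      mul_nonneg (by linarith : (0:ℝ) ≤ |(m:ℝ)|) (by nlinarith : (0:ℝ) ≤ 5*|(m:ℝ)|^2 - 36)]
  rcases hcase with h | h | h | h
  · subst h; norm_num; nlinarith
  · subst h; norm_num; nlinarith
  · exact key n (Or.inl h)
  · exact key n (Or.inr h)

theorem fourier_coefficients_g (γ : ℤ → ℂ)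
    (hγ : ∀ n : ℤ, n ≠ 0 →
      γ n = (1 / (2 * (π : ℂ))) * (Complex.I / (n : ℂ)) *
        (Complex.exp (-Complex.I * (n : ℂ) * ((π : ℂ) / 2)) - 1)) :
    (∀ n : ℤ, Odd n →
      (1 / 2 : ℂ) * (γ (2 - n) + γ (-2 - n)) + γ n
        = (Complex.I / (2 * (π : ℂ))) *
            (Complex.exp (-Complex.I * (π : ℂ) * (n : ℂ) / 2) - 1) *
            (-4 / ((n : ℂ) * ((n : ℂ) ^ 2 - 4)))) ∧
    ∃ C : ℝ, ∀ n : ℤ, Odd n →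
      ‖(1 / 2 : ℂ) * (γ (2 - n) + γ (-2 - n)) + γ n‖ ≤ C / |(n : ℝ)| ^ 3 := by
  have key : ∀ n : ℤ, Odd n →
      (1 / 2 : ℂ) * (γ (2 - n) + γ (-2 - n)) + γ n
        = (Complex.I / (2 * (π : ℂ))) *
            (Complex.exp (-Complex.I * (π : ℂ) * (n : ℂ) / 2) - 1) *
            (-4 / ((n : ℂ) * ((n : ℂ) ^ 2 - 4))) := by
    intro n hn
    obtain ⟨k, hk⟩ := hn
    have h1 : n ≠ 0 := by omega
    have h2 : (2 - n) ≠ 0 := by omega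
    have h3 : (-2 - n) ≠ 0 := by omega
    have hπ : (π : ℂ) ≠ 0 := by
      exact_mod_cast Real.pi_ne_zero
    have hc1 : (n : ℂ) ≠ 0 := Int.cast_ne_zero.mpr h1
    have hc2 : ((2 - n : ℤ) : ℂ) ≠ 0 := Int.cast_ne_zero.mpr h2
    have hc3 : ((-2 - n : ℤ) : ℂ) ≠ 0 := Int.cast_ne_zero.mpr h3
    have hexpn : Complex.exp (Complex.I * (n : ℂ) * π) = -1 := by
      rw [show Complex.I * (n : ℂ) * π = (n : ℤ) * ((π:ℂ) * Complex.I) by ring,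
        Complex.exp_int_mul, Complex.exp_pi_mul_I]
      exact Odd.neg_one_zpow ⟨k, hk⟩
    have e1 : Complex.exp (-Complex.I * ((2 - n : ℤ) : ℂ) * ((π:ℂ) / 2))
        = Complex.exp (-Complex.I * (n : ℂ) * ((π:ℂ) / 2)) := by
      rw [show -Complex.I * ((2 - n : ℤ) : ℂ) * ((π:ℂ) / 2)
          = (Complex.I * (n : ℂ) * π) + (-Complex.I * (n : ℂ) * ((π:ℂ) / 2))
            + (-((π:ℂ) * Complex.I)) by push_cast; ring]
      rw [Complex.exp_add, Complex.exp_add, hexpn, Complex.exp_neg, Complex.exp_pi_mul_I]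
      norm_num
    have e2 : Complex.exp (-Complex.I * ((-2 - n : ℤ) : ℂ) * ((π:ℂ) / 2))
        = Complex.exp (-Complex.I * (n : ℂ) * ((π:ℂ) / 2)) := by
      rw [show -Complex.I * ((-2 - n : ℤ) : ℂ) * ((π:ℂ) / 2)
          = (Complex.I * (n : ℂ) * π) + (-Complex.I * (n : ℂ) * ((π:ℂ) / 2))
            + ((π:ℂ) * Complex.I) by push_cast; ring]
      rw [Complex.exp_add, Complex.exp_add, hexpn, Complex.exp_pi_mul_I]
      ring
    have e3 : -Complex.I * (π:ℂ) * (n : ℂ) / 2 = -Complex.I * (n : ℂ) * ((π:ℂ) / 2) := by ring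
    rw [hγ _ h1, hγ _ h2, hγ _ h3, e1, e2, e3]
    have hd : (n : ℂ) * ((n : ℂ) ^ 2 - 4) ≠ 0 := by
      apply mul_ne_zero hc1
      intro h
      have : ((n : ℂ) - 2) * ((n : ℂ) + 2) = 0 := by linear_combination h
      rcases mul_eq_zero.mp this with h | h
      · apply hc2; push_cast; linear_combination -h
      · apply hc3; push_cast; linear_combination -h
    have hd2 : ((n : ℂ) ^ 2 - 4) ≠ 0 := fun h => hd (by rw [h, mul_zero])
    have h8 : (n:ℂ) ^ 2 * (π:ℂ) ^ 2 * 8 - (π:ℂ) ^ 2 * 32 ≠ 0 := by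
      have h0 := mul_ne_zero (pow_ne_zero 2 hπ) hd2
      intro h
      apply h0
      linear_combination h / 8
    push_cast
    push_cast at hc2 hc3
    generalize Complex.exp (-Complex.I * (n:ℂ) * ((π:ℂ) / 2)) = E
    field_simp
    ring
  refine ⟨key, 3, fun n hn => ?_⟩
  rw [key n hn, norm_mul, norm_mul]
  obtain ⟨k, hk⟩ := hn
  have h1 : n ≠ 0 := by omega
  have h2 : (2 - n) ≠ 0 := by omega
  have h3 : (-2 - n) ≠ 0 := by omega
  have hπ := Real.pi_pos
  have ha : ‖Complex.I / (2 * (π : ℂ))‖ = 1 / (2 * π) := by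
    rw [norm_div, Complex.norm_I]
    congr 1
    rw [show (2 * (π:ℂ)) = ((2 * π : ℝ) : ℂ) by push_cast; ring, Complex.norm_real]
    exact abs_of_pos (by linarith)
  have hD0 : (n:ℝ) * ((n:ℝ) ^ 2 - 4) ≠ 0 := by
    have : ((n * (n ^ 2 - 4) : ℤ) : ℝ) ≠ 0 := by
      exact_mod_cast (by
        intro h
        rcases mul_eq_zero.mp h with h | h
        · exact h1 h
        · have : (n - 2) * (n + 2) = 0 := by linear_combination h
          rcases mul_eq_zero.mp this with h | h
          · omega
          · omega : n * (n ^ 2 - 4) ≠ 0)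
    push_cast at this
    exact this
  have hc : ‖(-4 : ℂ) / ((n : ℂ) * ((n : ℂ) ^ 2 - 4))‖
      = 4 / |(n:ℝ) * ((n:ℝ) ^ 2 - 4)| := by
    rw [norm_div]
    congr 1
    · rw [show (-4 : ℂ) = ((-4 : ℝ) : ℂ) by norm_num, Complex.norm_real]
      norm_num
    · rw [show ((n : ℂ) * ((n : ℂ) ^ 2 - 4)) = (((n:ℝ) * ((n:ℝ) ^ 2 - 4) : ℝ) : ℂ) by push_cast; ring,
        Complex.norm_real, Real.norm_eq_abs]
  have hb : ‖Complex.exp (-Complex.I * (π : ℂ) * (n : ℂ) / 2) - 1‖ ≤ 2 := by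
    have h1' : ‖Complex.exp (-Complex.I * (π : ℂ) * (n : ℂ) / 2)‖ = 1 := by
      rw [show -Complex.I * (π:ℂ) * (n:ℂ) / 2 = ((-(π * n) / 2 : ℝ) : ℂ) * Complex.I by
        push_cast; ring]
      exact Complex.norm_exp_ofReal_mul_I _
    calc ‖Complex.exp (-Complex.I * (π : ℂ) * (n : ℂ) / 2) - 1‖
        ≤ ‖Complex.exp (-Complex.I * (π : ℂ) * (n : ℂ) / 2)‖ + ‖(1:ℂ)‖ := norm_sub_le _ _
      _ = 2 := by rw [h1']; norm_num
  rw [ha, hc]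
  have hD : 0 < |(n:ℝ) * ((n:ℝ) ^ 2 - 4)| := abs_pos.mpr hD0
  have hn3 : 0 < |(n:ℝ)| ^ 3 := by
    apply pow_pos
    rw [abs_pos]
    exact_mod_cast h1
  calc 1 / (2 * π) * ‖Complex.exp (-Complex.I * (π : ℂ) * (n : ℂ) / 2) - 1‖
        * (4 / |(n:ℝ) * ((n:ℝ) ^ 2 - 4)|)
      ≤ 1 / (2 * π) * 2 * (4 / |(n:ℝ) * ((n:ℝ) ^ 2 - 4)|) := by
        gcongr
      _ ≤ 3 / |(n:ℝ)| ^ 3 := by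
        rw [show 1 / (2 * π) * 2 * (4 / |(n:ℝ) * ((n:ℝ) ^ 2 - 4)|)
            = 4 / (π * |(n:ℝ) * ((n:ℝ) ^ 2 - 4)|) by field_simp]
        rw [div_le_div_iff₀ (by positivity) hn3]
        have := aux_abs_bound n ⟨k, hk⟩
        nlinarith [hD, hπ]
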